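/- Let Q be a locally compact abelian group, W and Q' closed subgroups with W compact and Q = W + Q'. Let χ : Q → ℝ be a continuous homomorphism (necessarily vanishing on W), and Q_χ = {q : χ(q) ≥ 0}, Q'_χ = Q' ∩ Q_χ. Then Q_χ = Q'_χ + W, and every locally compact Q-module M that is compactly generated as a Q_χ-module is compactly generated as a Q'_χ-module. -/

import Mathlib

open Filter Topology

/-- let `Q` be a locally compact abelian group, `W, Q'` closed subgroups
with `W` compact and `Q = W + Q'`, and `χ : Q → ℝ` a continuous homomorphism. Then
`Q_χ = Q'_χ + W`, and every locally compact `Q`-module `M` that is compactly generated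
as a `Q_χ`-module is compactly generated as a `Q'_χ`-module. (Compact generation over a
submonoid `P`: there is a compact `K ⊆ M` such that the only closed `P`-invariant subgroup
containing `K` is `M` itself.) -/
theorem stmt11 {Q : Type*} [AddCommGroup Q] [TopologicalSpace Q] [IsTopologicalAddGroup Q]
    [LocallyCompactSpace Q]
    (W Q' : AddSubgroup Q) (hWcl : IsClosed (W : Set Q)) (hQ'cl : IsClosed (Q' : Set Q))
    (hWc : IsCompact (W : Set Q))
    (hsum : ∀ q : Q, ∃ w ∈ W, ∃ q' ∈ Q', q = w + q')
    (χ : Q →+ ℝ) (hχ : Continuous χ)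
    {M : Type*} [AddCommGroup M] [TopologicalSpace M] [IsTopologicalAddGroup M]
    [LocallyCompactSpace M]
    (ρ : Q → M ≃+ M) (hρ0 : ∀ x : M, ρ 0 x = x)
    (hρadd : ∀ a b : Q, ∀ x : M, ρ (a + b) x = ρ a (ρ b x))
    (hρcont : Continuous fun p : Q × M => ρ p.1 p.2) :
    (∀ q : Q, 0 ≤ χ q ↔ ∃ w ∈ W, ∃ q' ∈ Q', 0 ≤ χ q' ∧ q = w + q') ∧
    ((∃ K : Set M, IsCompact K ∧ ∀ N : AddSubgroup M, IsClosed (N : Set M) → K ⊆ N →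
        (∀ q : Q, 0 ≤ χ q → ∀ x ∈ N, ρ q x ∈ N) → N = ⊤) →
      ∃ K : Set M, IsCompact K ∧ ∀ N : AddSubgroup M, IsClosed (N : Set M) → K ⊆ N →
        (∀ q ∈ Q', 0 ≤ χ q → ∀ x ∈ N, ρ q x ∈ N) → N = ⊤) := by
  -- χ vanishes on W
  have hχW : ∀ w ∈ W, χ w = 0 := by
    intro w hw
    by_contra hne
    obtain ⟨r, hr⟩ := (hWc.image hχ).isBounded.exists_norm_le
    obtain ⟨n, hn⟩ := exists_nat_gt (r / |χ w|)
    have hmem : χ ((n : ℕ) • w) ∈ χ '' (W : Set Q) :=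
      Set.mem_image_of_mem _ (W.nsmul_mem hw n)
    have h1 : ‖χ ((n : ℕ) • w)‖ ≤ r := hr _ hmem
    have h2 : χ ((n : ℕ) • w) = (n : ℝ) * χ w := by
      rw [map_nsmul]; simp [nsmul_eq_mul]
    rw [h2, Real.norm_eq_abs, abs_mul, Nat.abs_cast] at h1
    have hpos : (0:ℝ) < |χ w| := abs_pos.mpr hne
    have : r / |χ w| < n := hn
    rw [div_lt_iff₀ hpos] at this
    linarith
  constructor
  · intro q
    constructor
    · intro hq
      obtain ⟨w, hw, q', hq', heq⟩ := hsum q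
      refine ⟨w, hw, q', hq', ?_, heq⟩
      have : χ q = χ w + χ q' := by rw [heq, map_add]
      rw [hχW w hw, zero_add] at this
      linarith
    · rintro ⟨w, hw, q', _, hq', rfl⟩
      rw [map_add, hχW w hw, zero_add]; exact hq'
  · rintro ⟨K, hKc, hK⟩
    refine ⟨(fun p : Q × M => ρ p.1 p.2) '' ((W : Set Q) ×ˢ K),
      (hWc.prod hKc).image hρcont, ?_⟩
    intro N hNcl hKN hNinv
    -- define N₀ = {x | ∀ w ∈ W, ρ w x ∈ N}
    set N₀ : AddSubgroup M := ⨅ w : W, N.comap (ρ (w : Q)).toAddMonoidHom with hN₀def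
    have hmem : ∀ x : M, x ∈ N₀ ↔ ∀ w ∈ W, ρ w x ∈ N := by
      intro x
      simp only [hN₀def, AddSubgroup.mem_iInf, AddSubgroup.mem_comap,
        AddEquiv.coe_toAddMonoidHom, Subtype.forall]
    have hN₀cl : IsClosed (N₀ : Set M) := by
      have : (N₀ : Set M) = ⋂ w : W, (fun x => ρ (w : Q) x) ⁻¹' (N : Set M) := by
        ext x
        simp only [Set.mem_iInter, Set.mem_preimage, SetLike.mem_coe, hmem x, Subtype.forall]
      rw [this]
      exact isClosed_iInter fun w =>
        hNcl.preimage (hρcont.comp (continuous_const.prodMk continuous_id))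
    have hKN₀ : K ⊆ N₀ := by
      intro x hx
      refine (hmem x).mpr fun w hw => ?_
      exact hKN ⟨(w, x), ⟨hw, hx⟩, rfl⟩
    have hinv : ∀ q : Q, 0 ≤ χ q → ∀ x ∈ N₀, ρ q x ∈ N₀ := by
      intro q hq x hx
      obtain ⟨w₀, hw₀, q', hq', heq⟩ := hsum q
      have hχq' : 0 ≤ χ q' := by
        have : χ q = χ w₀ + χ q' := by rw [heq, map_add]
        rw [hχW w₀ hw₀, zero_add] at this
        linarith
      rw [hmem]
      intro w hw
      have key : ρ w (ρ q x) = ρ q' (ρ (w + w₀) x) := by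
        have h : w + q = q' + (w + w₀) := by rw [heq]; abel
        rw [← hρadd, h, hρadd]
      rw [key]
      exact hNinv q' hq' hχq' _ ((hmem x).mp hx (w + w₀) (W.add_mem hw hw₀))
    have hN₀top : N₀ = ⊤ := hK N₀ hN₀cl hKN₀ hinv
    ext x
    simp only [AddSubgroup.mem_top, iff_true]
    have : x ∈ N₀ := hN₀top ▸ AddSubgroup.mem_top x
    have := (hmem x).mp this 0 W.zero_mem
    rwa [hρ0] at this
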